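/- Let G_1,…,G_T ∈ ℝ^{m×n} be matrices each of rank at most r, and let g_t := vec(G_t) ∈ ℝ^{mn} denote the row-stacking vectorization of G_t. Then for any ε ≥ 0: ε·I_{mn} + (1/r)·Σ_{t=1}^{T} g_t g_tᵀ ⪯ (ε·I_m + Σ_{t=1}^{T} G_t G_tᵀ)^{1/2} ⊗ (ε·I_n + Σ_{t=1}^{T} G_tᵀ G_t)^{1/2}. -/

import Mathlib

open Matrix
open scoped Kronecker

private lemma sum_swap4 {α β γ δ : Type*} [Fintype α] [Fintype β] [Fintype γ] [Fintype δ]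
    (f : α → β → γ → δ → ℝ) :
    ∑ c, ∑ a, ∑ i, ∑ j, f c a i j = ∑ i, ∑ j, ∑ c, ∑ a, f c a i j := by
  calc ∑ c, ∑ a, ∑ i, ∑ j, f c a i j
      = ∑ c, ∑ i, ∑ a, ∑ j, f c a i j := Finset.sum_congr rfl fun c _ => Finset.sum_comm
  _ = ∑ i, ∑ c, ∑ a, ∑ j, f c a i j := Finset.sum_comm
  _ = ∑ i, ∑ c, ∑ j, ∑ a, f c a i j := Finset.sum_congr rfl fun i _ =>
        Finset.sum_congr rfl fun c _ => Finset.sum_comm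
  _ = ∑ i, ∑ j, ∑ c, ∑ a, f c a i j := Finset.sum_congr rfl fun i _ => Finset.sum_comm

private lemma sum_perm4 {α β γ δ : Type*} [Fintype α] [Fintype β] [Fintype γ] [Fintype δ]
    (f : α → β → γ → δ → ℝ) :
    ∑ i, ∑ j, ∑ k, ∑ a, f i j k a = ∑ a, ∑ j, ∑ i, ∑ k, f i j k a := by
  calc ∑ i, ∑ j, ∑ k, ∑ a, f i j k a
      = ∑ i, ∑ j, ∑ a, ∑ k, f i j k a := Finset.sum_congr rfl fun i _ =>
        Finset.sum_congr rfl fun j _ => Finset.sum_comm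
  _ = ∑ i, ∑ a, ∑ j, ∑ k, f i j k a := Finset.sum_congr rfl fun i _ => Finset.sum_comm
  _ = ∑ a, ∑ i, ∑ j, ∑ k, f i j k a := Finset.sum_comm
  _ = ∑ a, ∑ j, ∑ i, ∑ k, f i j k a := Finset.sum_congr rfl fun a _ => Finset.sum_comm

private lemma sum_perm3 {β γ δ : Type*} [Fintype β] [Fintype γ] [Fintype δ]
    (f : β → γ → δ → ℝ) :
    ∑ j, ∑ l, ∑ a, f j l a = ∑ a, ∑ j, ∑ l, f j l a := by
  calc ∑ j, ∑ l, ∑ a, f j l a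
      = ∑ j, ∑ a, ∑ l, f j l a := Finset.sum_congr rfl fun j _ => Finset.sum_comm
  _ = ∑ a, ∑ j, ∑ l, f j l a := Finset.sum_comm

private lemma quad_expand {ι : Type*} [Fintype ι] (M : Matrix ι ι ℝ) (x : ι → ℝ) :
    x ⬝ᵥ M *ᵥ x = ∑ p, ∑ q, x p * M p q * x q := by
  simp [dotProduct, mulVec, Finset.mul_sum, mul_assoc]

private lemma dot_vecMulVec {ι : Type*} [Fintype ι] (g x : ι → ℝ) :
    x ⬝ᵥ (vecMulVec g g *ᵥ x) = (∑ p, g p * x p) ^ 2 := by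
  rw [quad_expand, sq, Finset.sum_mul_sum]
  apply Finset.sum_congr rfl; intro p _
  apply Finset.sum_congr rfl; intro q _
  rw [vecMulVec_apply]; ring

private lemma quad_kron_left {m n : ℕ} (G : Matrix (Fin m) (Fin n) ℝ) (x : Fin m × Fin n → ℝ) :
    x ⬝ᵥ (((G * Gᵀ) ⊗ₖ (1 : Matrix (Fin n) (Fin n) ℝ)) *ᵥ x)
      = ∑ a : Fin n, ∑ j : Fin n, (∑ i : Fin m, G i a * x (i, j)) ^ 2 := by
  rw [quad_expand, Fintype.sum_prod_type]
  calc ∑ i, ∑ j, ∑ q : Fin m × Fin n, x (i,j) * ((G*Gᵀ) ⊗ₖ (1 : Matrix (Fin n) (Fin n) ℝ)) (i,j) q * x q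
      = ∑ i, ∑ j, ∑ k, ∑ l, x (i,j) * ((G*Gᵀ) i k * (1 : Matrix (Fin n) (Fin n) ℝ) j l) * x (k,l) := by
        apply Finset.sum_congr rfl; intro i _
        apply Finset.sum_congr rfl; intro j _
        rw [Fintype.sum_prod_type]
        apply Finset.sum_congr rfl; intro k _
        apply Finset.sum_congr rfl; intro l _
        rw [kroneckerMap_apply]
  _ = ∑ i, ∑ j, ∑ k, x (i,j) * (G*Gᵀ) i k * x (k,j) := by
        apply Finset.sum_congr rfl; intro i _
        apply Finset.sum_congr rfl; intro j _
        apply Finset.sum_congr rfl; intro k _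
        calc ∑ l, x (i,j) * ((G*Gᵀ) i k * (1 : Matrix (Fin n) (Fin n) ℝ) j l) * x (k,l)
            = ∑ l, if j = l then x (i,j) * (G*Gᵀ) i k * x (k,l) else 0 := by
              apply Finset.sum_congr rfl; intro l _
              by_cases hl : j = l
              · rw [if_pos hl]
                subst hl
                rw [Matrix.one_apply_eq]; ring
              · rw [if_neg hl, Matrix.one_apply_ne hl]; ring
        _ = x (i,j) * (G*Gᵀ) i k * x (k,j) := by
              rw [Finset.sum_ite_eq]; simp
  _ = ∑ i, ∑ j, ∑ k, ∑ a, (G i a * x (i,j)) * (G k a * x (k,j)) := by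
        apply Finset.sum_congr rfl; intro i _
        apply Finset.sum_congr rfl; intro j _
        apply Finset.sum_congr rfl; intro k _
        rw [Matrix.mul_apply]
        simp only [Matrix.transpose_apply]
        rw [Finset.mul_sum, Finset.sum_mul]
        apply Finset.sum_congr rfl; intro a _
        ring
  _ = ∑ a, ∑ j, ∑ i, ∑ k, (G i a * x (i,j)) * (G k a * x (k,j)) := sum_perm4 _
  _ = ∑ a, ∑ j, (∑ i, G i a * x (i,j)) ^ 2 := by
        apply Finset.sum_congr rfl; intro a _
        apply Finset.sum_congr rfl; intro j _
        rw [sq, Finset.sum_mul_sum]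

private lemma quad_kron_right {m n : ℕ} (G : Matrix (Fin m) (Fin n) ℝ) (x : Fin m × Fin n → ℝ) :
    x ⬝ᵥ (((1 : Matrix (Fin m) (Fin m) ℝ) ⊗ₖ (Gᵀ * G)) *ᵥ x)
      = ∑ i : Fin m, ∑ a : Fin m, (∑ j : Fin n, G a j * x (i, j)) ^ 2 := by
  rw [quad_expand, Fintype.sum_prod_type]
  calc ∑ i, ∑ j, ∑ q : Fin m × Fin n, x (i,j) * ((1 : Matrix (Fin m) (Fin m) ℝ) ⊗ₖ (Gᵀ*G)) (i,j) q * x q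
      = ∑ i, ∑ j, ∑ k, ∑ l, x (i,j) * ((1 : Matrix (Fin m) (Fin m) ℝ) i k * (Gᵀ*G) j l) * x (k,l) := by
        apply Finset.sum_congr rfl; intro i _
        apply Finset.sum_congr rfl; intro j _
        rw [Fintype.sum_prod_type]
        apply Finset.sum_congr rfl; intro k _
        apply Finset.sum_congr rfl; intro l _
        rw [kroneckerMap_apply]
  _ = ∑ i, ∑ j, ∑ l, x (i,j) * (Gᵀ*G) j l * x (i,l) := by
        apply Finset.sum_congr rfl; intro i _
        apply Finset.sum_congr rfl; intro j _
        rw [Finset.sum_comm]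
        apply Finset.sum_congr rfl; intro l _
        calc ∑ k, x (i,j) * ((1 : Matrix (Fin m) (Fin m) ℝ) i k * (Gᵀ*G) j l) * x (k,l)
            = ∑ k, if i = k then x (i,j) * (Gᵀ*G) j l * x (k,l) else 0 := by
              apply Finset.sum_congr rfl; intro k _
              by_cases hk : i = k
              · rw [if_pos hk]
                subst hk
                rw [Matrix.one_apply_eq]; ring
              · rw [if_neg hk, Matrix.one_apply_ne hk]; ring
        _ = x (i,j) * (Gᵀ*G) j l * x (i,l) := by
              rw [Finset.sum_ite_eq]; simp
  _ = ∑ i, ∑ j, ∑ l, ∑ a, (G a j * x (i,j)) * (G a l * x (i,l)) := by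
        apply Finset.sum_congr rfl; intro i _
        apply Finset.sum_congr rfl; intro j _
        apply Finset.sum_congr rfl; intro l _
        rw [Matrix.mul_apply]
        simp only [Matrix.transpose_apply]
        rw [Finset.mul_sum, Finset.sum_mul]
        apply Finset.sum_congr rfl; intro a _
        ring
  _ = ∑ i, ∑ a, ∑ j, ∑ l, (G a j * x (i,j)) * (G a l * x (i,l)) := by
        apply Finset.sum_congr rfl; intro i _
        exact sum_perm3 _
  _ = ∑ i, ∑ a, (∑ j, G a j * x (i,j)) ^ 2 := by
        apply Finset.sum_congr rfl; intro i _
        apply Finset.sum_congr rfl; intro a _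
        rw [sq, Finset.sum_mul_sum]

private lemma trace_sq_le_finrank_mul {N : ℕ} (V : Submodule ℝ (EuclideanSpace ℝ (Fin N)))
    (Y : Fin N → Fin N → ℝ)
    (hY : ∀ j : Fin N, ((WithLp.equiv 2 (Fin N → ℝ)).symm (fun a => Y a j)) ∈ V) :
    (∑ a, Y a a) ^ 2 ≤ (Module.finrank ℝ V : ℝ) * ∑ a, ∑ c, Y a c ^ 2 := by
  classical
  set k := Module.finrank ℝ V with hk
  set b := stdOrthonormalBasis ℝ V with hb
  set w : Fin k → Fin N → ℝ := fun i a => (b i : EuclideanSpace ℝ (Fin N)) a with hw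
  have horth : ∀ i j : Fin k, (∑ a, w i a * w j a) = if i = j then 1 else 0 := by
    intro i j
    have h := (orthonormal_iff_ite (𝕜 := ℝ)).mp b.orthonormal i j
    rw [Submodule.coe_inner, PiLp.inner_apply] at h
    simpa [RCLike.inner_apply, w, mul_comm] using h
  have hrep : ∀ j a, Y a j = ∑ i, (∑ c, w i c * Y c j) * w i a := by
    intro j a
    set z : V := ⟨_, hY j⟩ with hz
    have h := b.sum_repr z
    have h2 := congrArg (Submodule.subtype V) h
    simp only [map_sum, _root_.map_smul, Submodule.subtype_apply] at h2
    have h3 := congrArg (WithLp.linearEquiv 2 ℝ (Fin N → ℝ)) h2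
    simp only [map_sum, _root_.map_smul] at h3
    have h4 := congrFun h3 a
    simp only [Finset.sum_apply, Pi.smul_apply, smul_eq_mul] at h4
    have hcoe : ∀ c, (z : EuclideanSpace ℝ (Fin N)) c = Y c j := fun c => rfl
    have hrepr : ∀ i, b.repr z i = ∑ c, w i c * Y c j := by
      intro i
      rw [b.repr_apply_apply, Submodule.coe_inner, PiLp.inner_apply]
      simp [RCLike.inner_apply, hcoe, w, mul_comm]
    have h5 : (∑ x, b.repr z x * w x a) = Y a j := h4
    rw [← h5]
    exact Finset.sum_congr rfl fun i _ => by rw [hrepr i]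
  set Pm : Fin N × Fin N → ℝ := fun q => ∑ i, w i q.1 * w i q.2 with hPm
  have htr : (∑ a, Y a a) = ∑ q : Fin N × Fin N, Pm q * Y q.1 q.2 := by
    rw [Fintype.sum_prod_type]
    calc ∑ a, Y a a = ∑ a, ∑ i, (∑ c, w i c * Y c a) * w i a :=
          Finset.sum_congr rfl fun a _ => hrep a a
    _ = ∑ a, ∑ i, ∑ c, (w i c * w i a) * Y c a := by
          apply Finset.sum_congr rfl; intro a _
          apply Finset.sum_congr rfl; intro i _
          rw [Finset.sum_mul]; apply Finset.sum_congr rfl; intro c _; ring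
    _ = ∑ a, ∑ c, ∑ i, (w i c * w i a) * Y c a := by
          apply Finset.sum_congr rfl; intro a _; exact Finset.sum_comm
    _ = ∑ c, ∑ a, ∑ i, (w i c * w i a) * Y c a := Finset.sum_comm
    _ = ∑ c, ∑ a, Pm (c, a) * Y c a := by
          apply Finset.sum_congr rfl; intro c _
          apply Finset.sum_congr rfl; intro a _
          rw [hPm, Finset.sum_mul]
  have hP2 : (∑ q : Fin N × Fin N, Pm q ^ 2) = (k : ℝ) := by
    calc ∑ q : Fin N × Fin N, Pm q ^ 2
        = ∑ c, ∑ a, (∑ i, w i c * w i a) * (∑ j, w j c * w j a) := by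
          rw [Fintype.sum_prod_type]; exact Finset.sum_congr rfl fun c _ =>
            Finset.sum_congr rfl fun a _ => by rw [sq]
    _ = ∑ c, ∑ a, ∑ i, ∑ j, (w i c * w j c) * (w i a * w j a) := by
          apply Finset.sum_congr rfl; intro c _
          apply Finset.sum_congr rfl; intro a _
          rw [Finset.sum_mul_sum]
          apply Finset.sum_congr rfl; intro i _
          apply Finset.sum_congr rfl; intro j _
          ring
    _ = ∑ i, ∑ j, (∑ c, w i c * w j c) * (∑ a, w i a * w j a) := by
          rw [sum_swap4]
          apply Finset.sum_congr rfl; intro i _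
          apply Finset.sum_congr rfl; intro j _
          rw [Finset.sum_mul_sum]
    _ = ∑ i : Fin k, (1 : ℝ) := by
          apply Finset.sum_congr rfl; intro i _
          rw [Finset.sum_eq_single i (fun j _ hj => by rw [horth i j, if_neg (Ne.symm hj)]; ring)
            (fun h => absurd (Finset.mem_univ i) h)]
          rw [horth i i, if_pos rfl]; ring
    _ = (k : ℝ) := by simp
  have hCS := Finset.sum_mul_sq_le_sq_mul_sq Finset.univ Pm (fun q => Y q.1 q.2)
  rw [htr]
  calc (∑ q : Fin N × Fin N, Pm q * Y q.1 q.2) ^ 2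
      ≤ (∑ q : Fin N × Fin N, Pm q ^ 2) * ∑ q : Fin N × Fin N, Y q.1 q.2 ^ 2 := hCS
  _ = (k : ℝ) * ∑ a, ∑ c, Y a c ^ 2 := by rw [hP2, Fintype.sum_prod_type]

private lemma scalar_left {m n : ℕ} (G : Matrix (Fin m) (Fin n) ℝ) (x : Fin m × Fin n → ℝ) :
    (∑ p : Fin m × Fin n, G p.1 p.2 * x p) ^ 2
      ≤ (G.rank : ℝ) * ∑ a : Fin n, ∑ j : Fin n, (∑ i : Fin m, G i a * x (i, j)) ^ 2 := by
  set V : Submodule ℝ (EuclideanSpace ℝ (Fin n)) :=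
    (LinearMap.range (Gᵀ).mulVecLin).map
      ((WithLp.linearEquiv 2 ℝ (Fin n → ℝ)).symm : (Fin n → ℝ) →ₗ[ℝ] EuclideanSpace ℝ (Fin n))
      with hV
  have hfr : Module.finrank ℝ V = G.rank := by
    rw [hV, LinearEquiv.finrank_map_eq, ← Matrix.rank_transpose G]
    rfl
  set Y : Fin n → Fin n → ℝ := fun a j => ∑ i, G i a * x (i, j) with hY
  have hmem : ∀ j, ((WithLp.equiv 2 (Fin n → ℝ)).symm (fun a => Y a j)) ∈ V := by
    intro j
    rw [hV]
    have hcol : Gᵀ.mulVecLin (fun i => x (i, j)) = fun a => Y a j := by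
      ext a
      rw [Matrix.mulVecLin_apply]
      simp only [Matrix.mulVec, dotProduct, Matrix.transpose_apply, hY]
    exact Submodule.mem_map.mpr ⟨Gᵀ.mulVecLin (fun i => x (i, j)),
      LinearMap.mem_range.mpr ⟨fun i => x (i, j), rfl⟩, by rw [hcol]; rfl⟩
  have hkey := trace_sq_le_finrank_mul V Y hmem
  rw [hfr] at hkey
  calc (∑ p : Fin m × Fin n, G p.1 p.2 * x p) ^ 2 = (∑ a, Y a a) ^ 2 := by
        rw [Fintype.sum_prod_type]
        congr 1
        rw [Finset.sum_comm]
  _ ≤ (G.rank : ℝ) * ∑ a, ∑ c, Y a c ^ 2 := hkey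
  _ = (G.rank : ℝ) * ∑ a : Fin n, ∑ j : Fin n, (∑ i : Fin m, G i a * x (i, j)) ^ 2 := rfl

private lemma scalar_right {m n : ℕ} (G : Matrix (Fin m) (Fin n) ℝ) (x : Fin m × Fin n → ℝ) :
    (∑ p : Fin m × Fin n, G p.1 p.2 * x p) ^ 2
      ≤ (G.rank : ℝ) * ∑ i : Fin m, ∑ a : Fin m, (∑ j : Fin n, G a j * x (i, j)) ^ 2 := by
  set V : Submodule ℝ (EuclideanSpace ℝ (Fin m)) :=
    (LinearMap.range G.mulVecLin).map
      ((WithLp.linearEquiv 2 ℝ (Fin m → ℝ)).symm : (Fin m → ℝ) →ₗ[ℝ] EuclideanSpace ℝ (Fin m))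
      with hV
  have hfr : Module.finrank ℝ V = G.rank := by
    rw [hV, LinearEquiv.finrank_map_eq]
    rfl
  set Y : Fin m → Fin m → ℝ := fun a c => ∑ j, G a j * x (c, j) with hY
  have hmem : ∀ c, ((WithLp.equiv 2 (Fin m → ℝ)).symm (fun a => Y a c)) ∈ V := by
    intro c
    rw [hV]
    have hcol : G.mulVecLin (fun j => x (c, j)) = fun a => Y a c := by
      ext a
      rw [Matrix.mulVecLin_apply]
      simp only [Matrix.mulVec, dotProduct, hY]
    exact Submodule.mem_map.mpr ⟨G.mulVecLin (fun j => x (c, j)),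
      LinearMap.mem_range.mpr ⟨fun j => x (c, j), rfl⟩, by rw [hcol]; rfl⟩
  have hkey := trace_sq_le_finrank_mul V Y hmem
  rw [hfr] at hkey
  calc (∑ p : Fin m × Fin n, G p.1 p.2 * x p) ^ 2 = (∑ a, Y a a) ^ 2 := by
        rw [Fintype.sum_prod_type]
  _ ≤ (G.rank : ℝ) * ∑ a, ∑ c, Y a c ^ 2 := hkey
  _ = (G.rank : ℝ) * ∑ i : Fin m, ∑ a : Fin m, (∑ j : Fin n, G a j * x (i, j)) ^ 2 := by
        rw [Finset.sum_comm]

private lemma isHermitian_of_symm {ι : Type*} [Fintype ι] {M : Matrix ι ι ℝ}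
    (h : ∀ i j, M j i = M i j) : M.IsHermitian :=
  Matrix.ext fun i j => by rw [conjTranspose_apply, star_trivial, h]

private lemma perterm_left {m n : ℕ} (r : ℕ) {G : Matrix (Fin m) (Fin n) ℝ} (h : G.rank ≤ r) :
    (((G * Gᵀ) ⊗ₖ (1 : Matrix (Fin n) (Fin n) ℝ))
      - (1 / (r : ℝ)) • vecMulVec (fun p : Fin m × Fin n => G p.1 p.2)
          (fun p : Fin m × Fin n => G p.1 p.2)).PosSemidef := by
  refine Matrix.PosSemidef.of_dotProduct_mulVec_nonneg ?_ ?_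
  · apply isHermitian_of_symm
    intro p q
    simp only [Matrix.sub_apply, Matrix.smul_apply, kroneckerMap_apply, vecMulVec_apply,
      smul_eq_mul]
    have h1 : (G * Gᵀ) q.1 p.1 = (G * Gᵀ) p.1 q.1 := by
      simp only [Matrix.mul_apply, Matrix.transpose_apply]
      exact Finset.sum_congr rfl fun c _ => mul_comm _ _
    have h2 : (1 : Matrix (Fin n) (Fin n) ℝ) q.2 p.2 = (1 : Matrix (Fin n) (Fin n) ℝ) p.2 q.2 := by
      by_cases hpq : p.2 = q.2
      · rw [hpq]
      · rw [Matrix.one_apply_ne (fun hh => hpq hh.symm), Matrix.one_apply_ne hpq]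
    rw [h1, h2]; ring
  · intro x
    have hsx : star x = x := funext fun p => star_trivial _
    rw [hsx, sub_mulVec, dotProduct_sub, smul_mulVec, dotProduct_smul, smul_eq_mul,
      quad_kron_left, dot_vecMulVec]
    have hsc := scalar_left G x
    set Q : ℝ := ∑ a : Fin n, ∑ j : Fin n, (∑ i, G i a * x (i, j)) ^ 2 with hQ
    have hQnn : 0 ≤ Q :=
      Finset.sum_nonneg fun a _ => Finset.sum_nonneg fun j _ => sq_nonneg _
    rcases Nat.eq_zero_or_pos r with hr | hr
    · subst hr
      simp only [Nat.cast_zero, div_zero, zero_mul]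
      linarith
    · have hrpos : (0 : ℝ) < r := by exact_mod_cast hr
      have h1 : (∑ p : Fin m × Fin n, G p.1 p.2 * x p) ^ 2 ≤ (r : ℝ) * Q :=
        le_trans hsc (mul_le_mul_of_nonneg_right (by exact_mod_cast h) hQnn)
      rw [sub_nonneg]
      calc (1 / (r : ℝ)) * (∑ p : Fin m × Fin n, G p.1 p.2 * x p) ^ 2
          ≤ (1 / (r : ℝ)) * ((r : ℝ) * Q) :=
            mul_le_mul_of_nonneg_left h1 (by positivity)
      _ = Q := by field_simp

private lemma perterm_right {m n : ℕ} (r : ℕ) {G : Matrix (Fin m) (Fin n) ℝ} (h : G.rank ≤ r) :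
    (((1 : Matrix (Fin m) (Fin m) ℝ) ⊗ₖ (Gᵀ * G))
      - (1 / (r : ℝ)) • vecMulVec (fun p : Fin m × Fin n => G p.1 p.2)
          (fun p : Fin m × Fin n => G p.1 p.2)).PosSemidef := by
  refine Matrix.PosSemidef.of_dotProduct_mulVec_nonneg ?_ ?_
  · apply isHermitian_of_symm
    intro p q
    simp only [Matrix.sub_apply, Matrix.smul_apply, kroneckerMap_apply, vecMulVec_apply,
      smul_eq_mul]
    have h1 : (Gᵀ * G) q.2 p.2 = (Gᵀ * G) p.2 q.2 := by
      simp only [Matrix.mul_apply, Matrix.transpose_apply]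
      exact Finset.sum_congr rfl fun c _ => mul_comm _ _
    have h2 : (1 : Matrix (Fin m) (Fin m) ℝ) q.1 p.1 = (1 : Matrix (Fin m) (Fin m) ℝ) p.1 q.1 := by
      by_cases hpq : p.1 = q.1
      · rw [hpq]
      · rw [Matrix.one_apply_ne (fun hh => hpq hh.symm), Matrix.one_apply_ne hpq]
    rw [h1, h2]; ring
  · intro x
    have hsx : star x = x := funext fun p => star_trivial _
    rw [hsx, sub_mulVec, dotProduct_sub, smul_mulVec, dotProduct_smul, smul_eq_mul,
      quad_kron_right, dot_vecMulVec]
    have hsc := scalar_right G x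
    set Q : ℝ := ∑ i : Fin m, ∑ a : Fin m, (∑ j, G a j * x (i, j)) ^ 2 with hQ
    have hQnn : 0 ≤ Q :=
      Finset.sum_nonneg fun a _ => Finset.sum_nonneg fun j _ => sq_nonneg _
    rcases Nat.eq_zero_or_pos r with hr | hr
    · subst hr
      simp only [Nat.cast_zero, div_zero, zero_mul]
      linarith
    · have hrpos : (0 : ℝ) < r := by exact_mod_cast hr
      have h1 : (∑ p : Fin m × Fin n, G p.1 p.2 * x p) ^ 2 ≤ (r : ℝ) * Q :=
        le_trans hsc (mul_le_mul_of_nonneg_right (by exact_mod_cast h) hQnn)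
      rw [sub_nonneg]
      calc (1 / (r : ℝ)) * (∑ p : Fin m × Fin n, G p.1 p.2 * x p) ^ 2
          ≤ (1 / (r : ℝ)) * ((r : ℝ) * Q) :=
            mul_le_mul_of_nonneg_left h1 (by positivity)
      _ = Q := by field_simp

section PSDHelp
variable {ι : Type*} [Fintype ι] [DecidableEq ι]

private lemma psd_quad {B : Matrix ι ι ℝ} (hB : B.PosSemidef) (x : ι → ℝ) :
    0 ≤ x ⬝ᵥ B *ᵥ x := by simpa using hB.dotProduct_mulVec_nonneg x

private lemma psd_diag_nonneg {B : Matrix ι ι ℝ} (hB : B.PosSemidef) (i : ι) :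
    0 ≤ B i i := by
  have := psd_quad hB (Pi.single i 1)
  simpa [single_dotProduct, mulVec_single] using this

private lemma psd_row_zero {B : Matrix ι ι ℝ} (hB : B.PosSemidef) {i : ι}
    (h : B i i = 0) (j : ι) : B i j = 0 := by
  have h1 : star (Pi.single i (1:ℝ)) ⬝ᵥ B *ᵥ Pi.single i 1 = 0 := by
    simpa [single_dotProduct, mulVec_single] using h
  have h2 := (hB.dotProduct_mulVec_zero_iff (Pi.single i 1)).mp h1
  have h3 : B j i = 0 := by
    have := congrFun h2 j
    simpa [mulVec_single] using this
  have h4 : Bᴴ = B := hB.1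
  have h5 : B i j = B j i := by
    have h6 := congrFun (congrFun h4 i) j
    rw [conjTranspose_apply, star_trivial] at h6
    exact h6.symm
  rw [h5]; exact h3

private lemma psd_cs {B : Matrix ι ι ℝ} (hB : B.PosSemidef) (u w : ι → ℝ) :
    (u ⬝ᵥ B *ᵥ w) ^ 2 ≤ (u ⬝ᵥ B *ᵥ u) * (w ⬝ᵥ B *ᵥ w) := by
  obtain ⟨C, rfl⟩ : ∃ C : Matrix ι ι ℝ, B = Cᴴ * C :=
    by open scoped MatrixOrder in exact CStarAlgebra.nonneg_iff_eq_star_mul_self.mp hB.nonneg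
  have key : ∀ a b : ι → ℝ, a ⬝ᵥ (Cᴴ * C) *ᵥ b = (C *ᵥ a) ⬝ᵥ (C *ᵥ b) := by
    intro a b
    rw [← mulVec_mulVec, dotProduct_mulVec, conjTranspose_eq_transpose_of_trivial,
      vecMul_transpose]
  rw [key, key, key]
  have := Finset.sum_mul_sq_le_sq_mul_sq Finset.univ (C *ᵥ u) (C *ᵥ w)
  simpa [dotProduct, pow_two] using this

private lemma lemmaD {B : Matrix ι ι ℝ} (hB : B.PosSemidef)
    {d e : ι → ℝ} (hd : ∀ i, 0 ≤ d i) (he : ∀ i, 0 ≤ e i)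
    (h1 : (Matrix.diagonal (fun i => d i ^ 2) - B).PosSemidef)
    (h2 : (Matrix.diagonal (fun i => e i ^ 2) - B).PosSemidef) :
    (Matrix.diagonal (fun i => d i * e i) - B).PosSemidef := by
  classical
  have hM : (Matrix.diagonal (fun i => d i * e i) - B).IsHermitian :=
    (Matrix.isHermitian_diagonal _).sub hB.1
  apply hM.posSemidef_iff_eigenvalues_nonneg.mpr
  rw [Pi.le_def]
  intro kk
  show 0 ≤ hM.eigenvalues kk
  by_contra hcon
  push_neg at hcon
  set lam := hM.eigenvalues kk with hlam
  set v : ι → ℝ := ⇑(hM.eigenvectorBasis kk) with hv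
  have heig : (Matrix.diagonal (fun i => d i * e i) - B) *ᵥ v = lam • v :=
    hM.mulVec_eigenvectorBasis kk
  have hvne : ∃ i, v i ≠ 0 := by
    by_contra hz
    push_neg at hz
    have : hM.eigenvectorBasis kk = 0 := by
      ext a; exact hz a
    exact hM.eigenvectorBasis.orthonormal.ne_zero kk this
  -- diagonal entries bounds
  have hBd : ∀ i, B i i ≤ d i ^ 2 := by
    intro i
    have := psd_diag_nonneg h1 i
    simp only [Matrix.sub_apply, Matrix.diagonal_apply_eq] at this
    linarith
  have hBe : ∀ i, B i i ≤ e i ^ 2 := by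
    intro i
    have := psd_diag_nonneg h2 i
    simp only [Matrix.sub_apply, Matrix.diagonal_apply_eq] at this
    linarith
  -- rows vanish where d or e vanishes
  have hrow : ∀ i, d i * e i = 0 → ∀ j, B i j = 0 := by
    intro i hi j
    have hBii : B i i = 0 := by
      rcases mul_eq_zero.mp hi with h0 | h0
      · have := hBd i; rw [h0] at this
        have h2' := psd_diag_nonneg hB i
        nlinarith
      · have := hBe i; rw [h0] at this
        have h2' := psd_diag_nonneg hB i
        nlinarith
    exact psd_row_zero hB hBii j
  -- v vanishes where d*e vanishes
  have hv0 : ∀ i, d i * e i = 0 → v i = 0 := by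
    intro i hi
    have hcomp := congrFun heig i
    have hBv : (B *ᵥ v) i = 0 := by
      simp only [mulVec, dotProduct]
      exact Finset.sum_eq_zero fun j _ => by rw [hrow i hi j, zero_mul]
    have hdiag : ((Matrix.diagonal (fun i => d i * e i)) *ᵥ v) i = 0 := by
      rw [mulVec_diagonal, hi, zero_mul]
    rw [sub_mulVec] at hcomp
    have : lam * v i = 0 := by
      have := hcomp
      simp only [Pi.sub_apply, Pi.smul_apply, smul_eq_mul] at this
      rw [hBv, hdiag] at this
      linarith
    rcases mul_eq_zero.mp this with h0 | h0
    · exact absurd h0 (ne_of_lt hcon)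
    · exact h0
  set w : ι → ℝ := fun i => if e i = 0 then 0 else d i * v i / e i with hw
  set c : ℝ := ∑ i, (d i * v i) ^ 2 with hc
  have hcnn : 0 ≤ c := Finset.sum_nonneg fun i _ => sq_nonneg _
  -- first term
  have hde : ∑ i, w i * ((fun i => d i * e i) i * v i) = c := by
    apply Finset.sum_congr rfl
    intro i _
    by_cases hei : e i = 0
    · have hvi : v i = 0 := hv0 i (by rw [hei, mul_zero])
      simp [hw, hei, hvi]
    · simp only [hw, if_neg hei]
      field_simp [hw, hei]
  have heq : w ⬝ᵥ ((Matrix.diagonal (fun i => d i * e i) - B) *ᵥ v) = lam * (w ⬝ᵥ v) := by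
    rw [heig, dotProduct_smul, smul_eq_mul]
  have hexp : w ⬝ᵥ ((Matrix.diagonal (fun i => d i * e i) - B) *ᵥ v)
      = c - w ⬝ᵥ B *ᵥ v := by
    rw [sub_mulVec, dotProduct_sub]
    congr 1
    calc w ⬝ᵥ (Matrix.diagonal (fun i => d i * e i) *ᵥ v)
        = ∑ i, w i * ((fun i => d i * e i) i * v i) := by
          simp [dotProduct, mulVec_diagonal]
    _ = c := hde
  set s : ℝ := w ⬝ᵥ v with hs
  have hsnn : 0 ≤ s := by
    apply Finset.sum_nonneg
    intro i _
    by_cases hei : e i = 0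
    · simp [hw, hei]
    · have : w i * v i = d i * v i ^ 2 / e i := by
        simp only [hw, if_neg hei]; field_simp [hw, hei]
      rw [this]
      have hei' : 0 < e i := lt_of_le_of_ne (he i) (Ne.symm hei)
      exact div_nonneg (mul_nonneg (hd i) (sq_nonneg _)) (le_of_lt hei')
  -- bounds on quadratic forms
  have hvBv : v ⬝ᵥ B *ᵥ v ≤ c := by
    have := psd_quad h1 v
    rw [sub_mulVec, dotProduct_sub] at this
    have hdv : v ⬝ᵥ (Matrix.diagonal (fun i => d i ^ 2) *ᵥ v) = c := by
      simp only [dotProduct, mulVec_diagonal, hc]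
      exact Finset.sum_congr rfl fun i _ => by ring
    linarith
  have hwBw : w ⬝ᵥ B *ᵥ w ≤ c := by
    have := psd_quad h2 w
    rw [sub_mulVec, dotProduct_sub] at this
    have hdw : w ⬝ᵥ (Matrix.diagonal (fun i => e i ^ 2) *ᵥ w) = c := by
      simp only [dotProduct, mulVec_diagonal, hc]
      apply Finset.sum_congr rfl
      intro i _
      by_cases hei : e i = 0
      · have hvi : v i = 0 := hv0 i (by rw [hei, mul_zero])
        simp [hw, hei, hvi]
      · simp only [hw, if_neg hei]
        field_simp [hw, hei]
    linarith
  have hcs := psd_cs hB w v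
  have hwBv : w ⬝ᵥ B *ᵥ v ≤ c := by
    have h0w : 0 ≤ w ⬝ᵥ B *ᵥ w := psd_quad hB w
    have h0v : 0 ≤ v ⬝ᵥ B *ᵥ v := psd_quad hB v
    nlinarith
  have hls : 0 ≤ lam * s := by
    have := heq
    rw [hexp] at this
    linarith
  have hs0 : s = 0 := by
    rcases lt_or_eq_of_le hsnn with hpos | hzero
    · exfalso
      have : lam * s < 0 := mul_neg_of_neg_of_pos hcon hpos
      linarith
    · exact hzero.symm
  -- s = 0 forces v = 0
  have hterm : ∀ i ∈ Finset.univ, w i * v i = 0 := by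
    apply (Finset.sum_eq_zero_iff_of_nonneg ?_).mp hs0
    · intro i _
      by_cases hei : e i = 0
      · simp [hw, hei]
      · have : w i * v i = d i * v i ^ 2 / e i := by
          simp only [hw, if_neg hei]; field_simp [hw, hei]
        rw [this]
        have hei' : 0 < e i := lt_of_le_of_ne (he i) (Ne.symm hei)
        exact div_nonneg (mul_nonneg (hd i) (sq_nonneg _)) (le_of_lt hei')
  obtain ⟨i, hvi⟩ := hvne
  by_cases hei : e i = 0
  · exact hvi (hv0 i (by rw [hei, mul_zero]))
  · by_cases hdi : d i = 0
    · exact hvi (hv0 i (by rw [hdi, zero_mul]))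
    · have h9 : d i * v i / e i * v i = 0 := by
        have := hterm i (Finset.mem_univ i)
        simpa [hw, hei] using this
      rcases mul_eq_zero.mp h9 with h | h
      · rcases div_eq_zero_iff.mp h with h' | h'
        · rcases mul_eq_zero.mp h' with h'' | h''
          · exact hdi h''
          · exact hvi h''
        · exact hei h'
      · exact hvi h

end PSDHelp

private lemma psd_smul {ι : Type*} [Fintype ι] {M : Matrix ι ι ℝ} (hM : M.PosSemidef)
    {c : ℝ} (hc : 0 ≤ c) : (c • M).PosSemidef := by
  refine Matrix.PosSemidef.of_dotProduct_mulVec_nonneg ?_ ?_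
  · show (c • M)ᴴ = c • M
    rw [conjTranspose_smul, star_trivial, hM.1]
  · intro x
    rw [smul_mulVec, dotProduct_smul, smul_eq_mul]
    exact mul_nonneg hc (hM.dotProduct_mulVec_nonneg x)

private lemma psd_sum {ι κ : Type*} [Fintype ι] (s : Finset κ) (f : κ → Matrix ι ι ℝ)
    (h : ∀ t ∈ s, (f t).PosSemidef) : (∑ t ∈ s, f t).PosSemidef := by
  classical
  induction s using Finset.induction_on with
  | empty => simpa using Matrix.PosSemidef.zero
  | @insert a s ha ih =>
    rw [Finset.sum_insert ha]
    exact (h _ (Finset.mem_insert_self _ _)).add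
      (ih fun t ht => h t (Finset.mem_insert_of_mem ht))

private lemma psd_vecMulVec {ι : Type*} [Fintype ι] (g : ι → ℝ) :
    (vecMulVec g g).PosSemidef := by
  refine Matrix.PosSemidef.of_dotProduct_mulVec_nonneg ?_ ?_
  · exact isHermitian_of_symm fun i j => by rw [vecMulVec_apply, vecMulVec_apply, mul_comm]
  · intro x
    have hsx : star x = x := funext fun p => star_trivial _
    rw [hsx, dot_vecMulVec]
    exact sq_nonneg _

/-- Shampoo Kronecker-product bound. For matrices `G_t` of rank at most `r`
with row-stacking vectorizations `g_t`, and `SL`, `SR` the positive semidefinite square roots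
of `ε·I_m + Σ G_t G_tᵀ` and `ε·I_n + Σ G_tᵀ G_t`, we have
`ε·I_{mn} + (1/r)·Σ g_t g_tᵀ ⪯ SL ⊗ SR`. -/
theorem shampoo_kronecker_bound
    {m n : ℕ} (T r : ℕ) (G : ℕ → Matrix (Fin m) (Fin n) ℝ)
    (hrank : ∀ t, (G t).rank ≤ r)
    (ε : ℝ) (hε : 0 ≤ ε)
    (SL : Matrix (Fin m) (Fin m) ℝ) (SR : Matrix (Fin n) (Fin n) ℝ)
    (hSL : SL.PosSemidef ∧
      SL * SL = ε • (1 : Matrix (Fin m) (Fin m) ℝ) +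
        ∑ t ∈ Finset.Icc 1 T, G t * (G t)ᵀ)
    (hSR : SR.PosSemidef ∧
      SR * SR = ε • (1 : Matrix (Fin n) (Fin n) ℝ) +
        ∑ t ∈ Finset.Icc 1 T, (G t)ᵀ * G t) :
    (SL ⊗ₖ SR -
      (ε • (1 : Matrix (Fin m × Fin n) (Fin m × Fin n) ℝ) +
        (1 / (r : ℝ)) • ∑ t ∈ Finset.Icc 1 T,
          Matrix.vecMulVec (fun p : Fin m × Fin n => G t p.1 p.2)
            (fun p : Fin m × Fin n => G t p.1 p.2))).PosSemidef := by
  classical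
  obtain ⟨hSLpsd, hSLsq⟩ := hSL
  obtain ⟨hSRpsd, hSRsq⟩ := hSR
  set A : Matrix (Fin m × Fin n) (Fin m × Fin n) ℝ :=
    ε • (1 : Matrix (Fin m × Fin n) (Fin m × Fin n) ℝ) +
      (1 / (r : ℝ)) • ∑ t ∈ Finset.Icc 1 T,
        Matrix.vecMulVec (fun p : Fin m × Fin n => G t p.1 p.2)
          (fun p : Fin m × Fin n => G t p.1 p.2) with hA
  have hApsd : A.PosSemidef := by
    refine (psd_smul Matrix.PosSemidef.one hε).add (psd_smul ?_ (by positivity))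
    exact psd_sum _ _ fun t _ => psd_vecMulVec _
  -- spectral data
  have hUh : SL.IsHermitian := hSLpsd.1
  have hVh : SR.IsHermitian := hSRpsd.1
  set U : Matrix (Fin m) (Fin m) ℝ := (hUh.eigenvectorUnitary : Matrix (Fin m) (Fin m) ℝ) with hU
  set Vm : Matrix (Fin n) (Fin n) ℝ := (hVh.eigenvectorUnitary : Matrix (Fin n) (Fin n) ℝ) with hVm
  set dL : Fin m → ℝ := hUh.eigenvalues with hdLdef
  set dR : Fin n → ℝ := hVh.eigenvalues with hdRdef
  have hdL : ∀ i, 0 ≤ dL i := hSLpsd.eigenvalues_nonneg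
  have hdR : ∀ i, 0 ≤ dR i := hSRpsd.eigenvalues_nonneg
  have hofL : RCLike.ofReal ∘ dL = dL := by
    rw [RCLike.ofReal_real_eq_id, Function.id_comp]
  have hofR : RCLike.ofReal ∘ dR = dR := by
    rw [RCLike.ofReal_real_eq_id, Function.id_comp]
  have specL : SL = U * Matrix.diagonal dL * star U := by
    have h := hUh.spectral_theorem
    rwa [hofL] at h
  have specR : SR = Vm * Matrix.diagonal dR * star Vm := by
    have h := hVh.spectral_theorem
    rwa [hofR] at h
  have hu1 : U * star U = 1 := Matrix.mem_unitaryGroup_iff.mp hUh.eigenvectorUnitary.2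
  have hu2 : star U * U = 1 := Matrix.mem_unitaryGroup_iff'.mp hUh.eigenvectorUnitary.2
  have hv1 : Vm * star Vm = 1 := Matrix.mem_unitaryGroup_iff.mp hVh.eigenvectorUnitary.2
  have hv2 : star Vm * Vm = 1 := Matrix.mem_unitaryGroup_iff'.mp hVh.eigenvectorUnitary.2
  set W : Matrix (Fin m × Fin n) (Fin m × Fin n) ℝ := U ⊗ₖ Vm with hW
  have hstarW : star W = star U ⊗ₖ star Vm := by
    rw [Matrix.star_eq_conjTranspose, Matrix.star_eq_conjTranspose,
      Matrix.star_eq_conjTranspose, conjTranspose_eq_transpose_of_trivial,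
      conjTranspose_eq_transpose_of_trivial, conjTranspose_eq_transpose_of_trivial,
      hW, Matrix.kroneckerMap_transpose]
  have hW1 : W * star W = 1 := by
    rw [hstarW, hW, ← Matrix.mul_kronecker_mul, hu1, hv1, Matrix.one_kronecker_one]
  have hW2 : star W * W = 1 := by
    rw [hstarW, hW, ← Matrix.mul_kronecker_mul, hu2, hv2, Matrix.one_kronecker_one]
  -- three conjugation identities
  have eq1 : SL ⊗ₖ SR
      = W * Matrix.diagonal (fun p : Fin m × Fin n => dL p.1 * dR p.2) * star W := by
    calc SL ⊗ₖ SR = (U * Matrix.diagonal dL * star U) ⊗ₖ (Vm * Matrix.diagonal dR * star Vm) := by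
          rw [← specL, ← specR]
    _ = ((U * Matrix.diagonal dL) ⊗ₖ (Vm * Matrix.diagonal dR)) * (star U ⊗ₖ star Vm) := by
          rw [Matrix.mul_kronecker_mul]
    _ = (U ⊗ₖ Vm) * (Matrix.diagonal dL ⊗ₖ Matrix.diagonal dR) * (star U ⊗ₖ star Vm) := by
          rw [Matrix.mul_kronecker_mul]
    _ = W * Matrix.diagonal (fun p : Fin m × Fin n => dL p.1 * dR p.2) * star W := by
          rw [Matrix.diagonal_kronecker_diagonal, hstarW, hW]
  have hSLsq' : SL * SL = U * Matrix.diagonal (fun i => dL i ^ 2) * star U := by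
    rw [specL]
    calc (U * Matrix.diagonal dL * star U) * (U * Matrix.diagonal dL * star U)
        = U * Matrix.diagonal dL * (star U * U) * Matrix.diagonal dL * star U := by
          simp only [Matrix.mul_assoc]
    _ = U * (Matrix.diagonal dL * Matrix.diagonal dL) * star U := by
          rw [hu2]
          simp only [Matrix.mul_assoc, Matrix.one_mul]
    _ = U * Matrix.diagonal (fun i => dL i ^ 2) * star U := by
          rw [Matrix.diagonal_mul_diagonal]
          have hsq : (fun i => dL i * dL i) = fun i => dL i ^ 2 :=
            funext fun i => (sq (dL i)).symm
          rw [hsq]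
  have hSRsq' : SR * SR = Vm * Matrix.diagonal (fun i => dR i ^ 2) * star Vm := by
    rw [specR]
    calc (Vm * Matrix.diagonal dR * star Vm) * (Vm * Matrix.diagonal dR * star Vm)
        = Vm * Matrix.diagonal dR * (star Vm * Vm) * Matrix.diagonal dR * star Vm := by
          simp only [Matrix.mul_assoc]
    _ = Vm * (Matrix.diagonal dR * Matrix.diagonal dR) * star Vm := by
          rw [hv2]
          simp only [Matrix.mul_assoc, Matrix.one_mul]
    _ = Vm * Matrix.diagonal (fun i => dR i ^ 2) * star Vm := by
          rw [Matrix.diagonal_mul_diagonal]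
          have hsq : (fun i => dR i * dR i) = fun i => dR i ^ 2 :=
            funext fun i => (sq (dR i)).symm
          rw [hsq]
  have eq2 : (SL * SL) ⊗ₖ (1 : Matrix (Fin n) (Fin n) ℝ)
      = W * Matrix.diagonal (fun p : Fin m × Fin n => dL p.1 ^ 2) * star W := by
    calc (SL * SL) ⊗ₖ (1 : Matrix (Fin n) (Fin n) ℝ)
        = (U * Matrix.diagonal (fun i => dL i ^ 2) * star U) ⊗ₖ (Vm * 1 * star Vm) := by
          rw [← hSLsq', Matrix.mul_one, hv1]
    _ = ((U * Matrix.diagonal (fun i => dL i ^ 2)) ⊗ₖ (Vm * 1)) * (star U ⊗ₖ star Vm) := by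
          rw [Matrix.mul_kronecker_mul]
    _ = (U ⊗ₖ Vm) * (Matrix.diagonal (fun i => dL i ^ 2) ⊗ₖ (1 : Matrix (Fin n) (Fin n) ℝ)) *
          (star U ⊗ₖ star Vm) := by
          rw [Matrix.mul_kronecker_mul]
    _ = W * Matrix.diagonal (fun p : Fin m × Fin n => dL p.1 ^ 2) * star W := by
          rw [← Matrix.diagonal_one, Matrix.diagonal_kronecker_diagonal, hstarW, hW]
          have hfun : (fun mn : Fin m × Fin n => dL mn.1 ^ 2 * 1) = fun p : Fin m × Fin n => dL p.1 ^ 2 := by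
            funext p; rw [mul_one]
          rw [hfun]
  have eq3 : (1 : Matrix (Fin m) (Fin m) ℝ) ⊗ₖ (SR * SR)
      = W * Matrix.diagonal (fun p : Fin m × Fin n => dR p.2 ^ 2) * star W := by
    calc (1 : Matrix (Fin m) (Fin m) ℝ) ⊗ₖ (SR * SR)
        = (U * 1 * star U) ⊗ₖ (Vm * Matrix.diagonal (fun i => dR i ^ 2) * star Vm) := by
          rw [← hSRsq', Matrix.mul_one, hu1]
    _ = ((U * 1) ⊗ₖ (Vm * Matrix.diagonal (fun i => dR i ^ 2))) * (star U ⊗ₖ star Vm) := by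
          rw [Matrix.mul_kronecker_mul]
    _ = (U ⊗ₖ Vm) * ((1 : Matrix (Fin m) (Fin m) ℝ) ⊗ₖ Matrix.diagonal (fun i => dR i ^ 2)) *
          (star U ⊗ₖ star Vm) := by
          rw [Matrix.mul_kronecker_mul]
    _ = W * Matrix.diagonal (fun p : Fin m × Fin n => dR p.2 ^ 2) * star W := by
          rw [← Matrix.diagonal_one, Matrix.diagonal_kronecker_diagonal, hstarW, hW]
          have hfun : (fun mn : Fin m × Fin n => 1 * dR mn.2 ^ 2) = fun p : Fin m × Fin n => dR p.2 ^ 2 := by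
            funext p; rw [one_mul]
          rw [hfun]
  set B : Matrix (Fin m × Fin n) (Fin m × Fin n) ℝ := star W * A * W with hB
  have hBpsd : B.PosSemidef := by
    rw [hB, Matrix.star_eq_conjTranspose]
    exact hApsd.conjTranspose_mul_mul_same W
  -- left difference
  have hP1 : ((SL * SL) ⊗ₖ (1 : Matrix (Fin n) (Fin n) ℝ) - A).PosSemidef := by
    have expand : (SL * SL) ⊗ₖ (1 : Matrix (Fin n) (Fin n) ℝ) - A
        = ∑ t ∈ Finset.Icc 1 T, ((G t * (G t)ᵀ) ⊗ₖ (1 : Matrix (Fin n) (Fin n) ℝ)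
            - (1 / (r : ℝ)) • Matrix.vecMulVec (fun p : Fin m × Fin n => G t p.1 p.2)
                (fun p : Fin m × Fin n => G t p.1 p.2)) := by
      rw [hSLsq, Matrix.add_kronecker, Matrix.smul_kronecker, Matrix.one_kronecker_one]
      have hsum : (∑ t ∈ Finset.Icc 1 T, G t * (G t)ᵀ) ⊗ₖ (1 : Matrix (Fin n) (Fin n) ℝ)
          = ∑ t ∈ Finset.Icc 1 T, (G t * (G t)ᵀ) ⊗ₖ (1 : Matrix (Fin n) (Fin n) ℝ) := by
        ext p q
        simp [Matrix.kroneckerMap_apply, Matrix.sum_apply, Finset.sum_mul]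
      rw [hsum, hA, Finset.smul_sum, Finset.sum_sub_distrib]
      abel
    rw [expand]
    exact psd_sum _ _ fun t _ => perterm_left r (hrank t)
  have hP2 : ((1 : Matrix (Fin m) (Fin m) ℝ) ⊗ₖ (SR * SR) - A).PosSemidef := by
    have expand : (1 : Matrix (Fin m) (Fin m) ℝ) ⊗ₖ (SR * SR) - A
        = ∑ t ∈ Finset.Icc 1 T, ((1 : Matrix (Fin m) (Fin m) ℝ) ⊗ₖ ((G t)ᵀ * G t)
            - (1 / (r : ℝ)) • Matrix.vecMulVec (fun p : Fin m × Fin n => G t p.1 p.2)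
                (fun p : Fin m × Fin n => G t p.1 p.2)) := by
      rw [hSRsq, Matrix.kronecker_add, Matrix.kronecker_smul, Matrix.one_kronecker_one]
      have hsum : (1 : Matrix (Fin m) (Fin m) ℝ) ⊗ₖ (∑ t ∈ Finset.Icc 1 T, (G t)ᵀ * G t)
          = ∑ t ∈ Finset.Icc 1 T, (1 : Matrix (Fin m) (Fin m) ℝ) ⊗ₖ ((G t)ᵀ * G t) := by
        ext p q
        simp [Matrix.kroneckerMap_apply, Matrix.sum_apply, Finset.mul_sum]
      rw [hsum, hA, Finset.smul_sum, Finset.sum_sub_distrib]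
      abel
    rw [expand]
    exact psd_sum _ _ fun t _ => perterm_right r (hrank t)
  have hD1 : (Matrix.diagonal (fun p : Fin m × Fin n => dL p.1 ^ 2) - B).PosSemidef := by
    have key : Matrix.diagonal (fun p : Fin m × Fin n => dL p.1 ^ 2) - B
        = star W * ((SL * SL) ⊗ₖ (1 : Matrix (Fin n) (Fin n) ℝ) - A) * W := by
      rw [Matrix.mul_sub, Matrix.sub_mul, hB]
      congr 1
      rw [eq2]
      calc Matrix.diagonal (fun p : Fin m × Fin n => dL p.1 ^ 2)
          = 1 * Matrix.diagonal (fun p : Fin m × Fin n => dL p.1 ^ 2) * 1 := by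
            rw [Matrix.one_mul, Matrix.mul_one]
      _ = star W * (W * Matrix.diagonal (fun p : Fin m × Fin n => dL p.1 ^ 2) * star W) * W := by
            rw [← hW2]
            simp only [Matrix.mul_assoc]
    rw [key, Matrix.star_eq_conjTranspose]
    exact hP1.conjTranspose_mul_mul_same W
  have hD2 : (Matrix.diagonal (fun p : Fin m × Fin n => dR p.2 ^ 2) - B).PosSemidef := by
    have key : Matrix.diagonal (fun p : Fin m × Fin n => dR p.2 ^ 2) - B
        = star W * ((1 : Matrix (Fin m) (Fin m) ℝ) ⊗ₖ (SR * SR) - A) * W := by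
      rw [Matrix.mul_sub, Matrix.sub_mul, hB]
      congr 1
      rw [eq3]
      calc Matrix.diagonal (fun p : Fin m × Fin n => dR p.2 ^ 2)
          = 1 * Matrix.diagonal (fun p : Fin m × Fin n => dR p.2 ^ 2) * 1 := by
            rw [Matrix.one_mul, Matrix.mul_one]
      _ = star W * (W * Matrix.diagonal (fun p : Fin m × Fin n => dR p.2 ^ 2) * star W) * W := by
            rw [← hW2]
            simp only [Matrix.mul_assoc]
    rw [key, Matrix.star_eq_conjTranspose]
    exact hP2.conjTranspose_mul_mul_same W
  have hDfinal : (Matrix.diagonal (fun p : Fin m × Fin n => dL p.1 * dR p.2) - B).PosSemidef :=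
    lemmaD hBpsd (fun p => hdL p.1) (fun p => hdR p.2) hD1 hD2
  have hdiff : SL ⊗ₖ SR - A
      = W * (Matrix.diagonal (fun p : Fin m × Fin n => dL p.1 * dR p.2) - B) * star W := by
    rw [Matrix.mul_sub, Matrix.sub_mul, ← eq1, hB]
    congr 1
    calc A = (W * star W) * A * (W * star W) := by rw [hW1, Matrix.one_mul, Matrix.mul_one]
    _ = W * (star W * A * W) * star W := by simp only [Matrix.mul_assoc]
  rw [hdiff, Matrix.star_eq_conjTranspose]
  exact hDfinal.mul_mul_conjTranspose_same W
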